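/- For a matroid M on ground set E and a flag of flats 𝓕 of M, let K_𝓕 = {ω ∈ ℝ^E : ω_e ≤ ω_f when 𝓕^e ⊊ 𝓕^f and ω_e = ω_f when 𝓕^e = 𝓕^f}. Then for matroids M, N on common finite ground set E and flags 𝓕, 𝓖, the linear span of the Minkowski sum K_𝓕 + K_𝓖 equals the column span of the vertex-edge incidence matrix of the bipartite multigraph H^E_{𝓕,𝓖}; in particular its dimension equals the rank of the graphic matroid of H^E_{𝓕,𝓖}. -/

import Mathlib

open scoped Classical Pointwise

/-- The Bergman cone `K_𝓕` associated to a minimal-flat function `Fm` of a flag: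
`ω_e ≤ ω_f` when `Fm e ⊊ Fm f` and `ω_e = ω_f` when `Fm e = Fm f`. -/
def bergmanCone {E : Type*} (Fm : E → Set E) : Set (E → ℝ) :=
  {ω | ∀ e f : E, (Fm e ⊂ Fm f → ω e ≤ ω f) ∧ (Fm e = Fm f → ω e = ω f)}

/-- The column of the incidence matrix of `H^E_{𝓕,𝓖}` indexed by a flat `F`
(on the `𝓕`-side): the characteristic vector of `{e | Fm e = F}`. -/
noncomputable def incidenceCol {E : Type*} (Fm : E → Set E) (F : Set E) : E → ℝ :=
  fun e => if Fm e = F then 1 else 0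

set_option linter.unusedSectionVars false
set_option maxHeartbeats 1000000

section Helpers

variable {E : Type*} [Fintype E]

/-- Row of the incidence matrix: edge `e` joins vertex `inl (Fm e)` to `inr (Gm e)`. -/
noncomputable def rowVec (Fm Gm : E → Set E) (e : E) : (Set E ⊕ Set E) → ℝ :=
  Sum.elim (fun F => if Fm e = F then 1 else 0) (fun G => if Gm e = G then 1 else 0)

lemma exists_leaf (Fm Gm : E → Set E) (J : Finset E)
    (h : J.card < (J.image Fm).card + (J.image Gm).card) :
    (∃ e₀ ∈ J, ∀ e ∈ J, Fm e = Fm e₀ → e = e₀) ∨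
    (∃ e₀ ∈ J, ∀ e ∈ J, Gm e = Gm e₀ → e = e₀) := by
  by_contra hc
  push_neg at hc
  obtain ⟨h1, h2⟩ := hc
  have key : ∀ (f : E → Set E),
      (∀ e₀ ∈ J, ∃ e ∈ J, f e = f e₀ ∧ e ≠ e₀) →
      2 * (J.image f).card ≤ J.card := by
    intro f hf
    have hcard : J.card = ∑ F ∈ J.image f, (J.filter (fun a => f a = F)).card :=
      Finset.card_eq_sum_card_fiberwise (fun x hx => Finset.mem_image_of_mem f hx)
    have hge : ∀ F ∈ J.image f, 2 ≤ (J.filter (fun a => f a = F)).card := by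
      intro F hF
      obtain ⟨e₀, he₀, rfl⟩ := Finset.mem_image.1 hF
      obtain ⟨e, he, hfe, hne⟩ := hf e₀ he₀
      apply Finset.one_lt_card.2
      exact ⟨e, Finset.mem_filter.2 ⟨he, hfe⟩, e₀, Finset.mem_filter.2 ⟨he₀, rfl⟩, hne⟩
    calc 2 * (J.image f).card = ∑ _F ∈ J.image f, 2 := by
          rw [Finset.sum_const, smul_eq_mul, mul_comm]
      _ ≤ ∑ F ∈ J.image f, (J.filter (fun a => f a = F)).card := Finset.sum_le_sum hge
      _ = J.card := hcard.symm
  have k1 := key Fm h1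
  have k2 := key Gm h2
  omega

lemma coeff_leaf_zero_F (Fm Gm : E → Set E) (J : Finset E) (c : E → ℝ)
    (hsum : ∑ e ∈ J, c e • rowVec Fm Gm e = 0) (e₀ : E) (he₀ : e₀ ∈ J)
    (huniq : ∀ e ∈ J, Fm e = Fm e₀ → e = e₀) : c e₀ = 0 := by
  have h := congrFun hsum (Sum.inl (Fm e₀))
  simp only [Finset.sum_apply, Pi.smul_apply, Pi.zero_apply, rowVec, Sum.elim_inl,
    smul_eq_mul, mul_ite, mul_one, mul_zero] at h
  rwa [Finset.sum_eq_single_of_mem e₀ he₀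
    (fun b hb hne => if_neg (fun hb' => hne (huniq b hb hb'))), if_pos rfl] at h

lemma coeff_leaf_zero_G (Fm Gm : E → Set E) (J : Finset E) (c : E → ℝ)
    (hsum : ∑ e ∈ J, c e • rowVec Fm Gm e = 0) (e₀ : E) (he₀ : e₀ ∈ J)
    (huniq : ∀ e ∈ J, Gm e = Gm e₀ → e = e₀) : c e₀ = 0 := by
  have h := congrFun hsum (Sum.inr (Gm e₀))
  simp only [Finset.sum_apply, Pi.smul_apply, Pi.zero_apply, rowVec, Sum.elim_inr,
    smul_eq_mul, mul_ite, mul_one, mul_zero] at h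
  rwa [Finset.sum_eq_single_of_mem e₀ he₀
    (fun b hb hne => if_neg (fun hb' => hne (huniq b hb hb'))), if_pos rfl] at h

lemma key_zero (Fm Gm : E → Set E) :
    ∀ (n : ℕ) (J : Finset E), J.card = n →
    (∀ J' ⊆ J, J'.Nonempty → J'.card < (J'.image Fm).card + (J'.image Gm).card) →
    ∀ c : E → ℝ, ∑ e ∈ J, c e • rowVec Fm Gm e = 0 → ∀ e ∈ J, c e = 0 := by
  intro n
  induction n with
  | zero => intro J hJ _ c _ e he
            rw [Finset.card_eq_zero] at hJ; subst hJ; exact absurd he (Finset.notMem_empty e)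
  | succ n ih =>
    intro J hJ hcond c hsum e he
    have hne : J.Nonempty := Finset.card_pos.1 (by omega)
    obtain hleaf | hleaf := exists_leaf Fm Gm J (hcond J le_rfl hne)
    all_goals {
      obtain ⟨e₀, he₀, huniq⟩ := hleaf
      have hc₀ : c e₀ = 0 := by
        first
        | exact coeff_leaf_zero_F Fm Gm J c hsum e₀ he₀ huniq
        | exact coeff_leaf_zero_G Fm Gm J c hsum e₀ he₀ huniq
      have hsum' : ∑ x ∈ J.erase e₀, c x • rowVec Fm Gm x = 0 := by
        rw [← Finset.add_sum_erase J _ he₀] at hsum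
        rw [hc₀] at hsum
        simpa using hsum
      have hcard' : (J.erase e₀).card = n := by
        rw [Finset.card_erase_of_mem he₀, hJ]; rfl
      have hcond' : ∀ J' ⊆ J.erase e₀, J'.Nonempty →
          J'.card < (J'.image Fm).card + (J'.image Gm).card :=
        fun J' hJ' => hcond J' (hJ'.trans (Finset.erase_subset _ _))
      rcases eq_or_ne e e₀ with rfl | hne'
      · exact hc₀
      · exact ih (J.erase e₀) hcard' hcond' c hsum' e (Finset.mem_erase.2 ⟨hne', he⟩) }

lemma indep_of_cond (Fm Gm : E → Set E) (I : Finset E)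
    (h : ∀ J ⊆ I, J.Nonempty → J.card < (J.image Fm).card + (J.image Gm).card) :
    LinearIndependent ℝ (fun e : {x // x ∈ I} => rowVec Fm Gm e.val) := by
  rw [Fintype.linearIndependent_iff]
  intro g hg i
  set c : E → ℝ := fun e => if h : e ∈ I then g ⟨e, h⟩ else 0 with hc
  have hsum : ∑ e ∈ I, c e • rowVec Fm Gm e = 0 := by
    calc ∑ e ∈ I, c e • rowVec Fm Gm e
        = ∑ x ∈ I.attach, c x.val • rowVec Fm Gm x.val :=
          (Finset.sum_attach I (fun e => c e • rowVec Fm Gm e)).symm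
      _ = ∑ x ∈ I.attach, g x • rowVec Fm Gm x.val :=
          Finset.sum_congr rfl (fun x _ => by rw [hc]; simp [x.2])
      _ = 0 := by rw [← Finset.univ_eq_attach]; exact hg
  have := key_zero Fm Gm I.card I rfl h c hsum i.val i.2
  simpa [hc, i.2] using this

lemma cond_of_indep (Fm Gm : E → Set E) (I : Finset E)
    (h : LinearIndependent ℝ (fun e : {x // x ∈ I} => rowVec Fm Gm e.val)) :
    ∀ J ⊆ I, J.Nonempty → J.card < (J.image Fm).card + (J.image Gm).card := by
  intro J hJI hJne
  have hJ : LinearIndependent ℝ (fun e : {x // x ∈ J} => rowVec Fm Gm e.val) :=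
    h.comp (fun x : {x // x ∈ J} => (⟨x.val, hJI x.2⟩ : {x // x ∈ I}))
      (fun a b hab => Subtype.ext (by simpa using congrArg Subtype.val hab))
  by_contra hlt
  push_neg at hlt
  obtain ⟨g₀, hg₀⟩ := hJne
  set χ : (Set E ⊕ Set E) → ((Set E ⊕ Set E) → ℝ) := fun v w => if w = v then (1:ℝ) else 0 with hχ
  set G₀ := Gm g₀ with hG₀
  set U : Finset ((Set E ⊕ Set E) → ℝ) :=
    (J.image Fm).image (fun F => χ (Sum.inl F) + χ (Sum.inr G₀)) ∪
    ((J.image Gm).erase G₀).image (fun G => χ (Sum.inr G) - χ (Sum.inr G₀)) with hU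
  have hrow : ∀ e ∈ J, rowVec Fm Gm e ∈ Submodule.span ℝ (U : Set ((Set E ⊕ Set E) → ℝ)) := by
    intro e he
    have hdecomp : rowVec Fm Gm e =
        (χ (Sum.inl (Fm e)) + χ (Sum.inr G₀)) + (χ (Sum.inr (Gm e)) - χ (Sum.inr G₀)) := by
      have hab : ∀ a b c : (Set E ⊕ Set E) → ℝ, (a + b) + (c - b) = a + c := by
        intro a b c; abel
      rw [hab]
      funext w
      cases w with
      | inl F =>
        by_cases hF : Fm e = F
        · subst hF; simp [rowVec, hχ]
        · simp [rowVec, hχ, hF, Ne.symm hF]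
      | inr G =>
        by_cases hG : Gm e = G
        · subst hG; simp [rowVec, hχ]
        · simp [rowVec, hχ, hG, Ne.symm hG]
    have h1 : χ (Sum.inl (Fm e)) + χ (Sum.inr G₀) ∈ (U : Set ((Set E ⊕ Set E) → ℝ)) := by
      exact Finset.mem_coe.2 (Finset.mem_union_left _
        (Finset.mem_image_of_mem _ (Finset.mem_image_of_mem Fm he)))
    have h2 : χ (Sum.inr (Gm e)) - χ (Sum.inr G₀) ∈
        Submodule.span ℝ (U : Set ((Set E ⊕ Set E) → ℝ)) := by
      rcases eq_or_ne (Gm e) G₀ with hG | hG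
      · rw [hG, sub_self]; exact Submodule.zero_mem _
      · exact Submodule.subset_span (Finset.mem_coe.2 (Finset.mem_union_right _
          (Finset.mem_image_of_mem _
            (Finset.mem_erase.2 ⟨hG, Finset.mem_image_of_mem Gm he⟩))))
    rw [hdecomp]
    exact Submodule.add_mem _ (Submodule.subset_span h1) h2
  have hcardU : U.card ≤ (J.image Fm).card + ((J.image Gm).card - 1) := by
    refine (Finset.card_union_le _ _).trans (add_le_add ?_ ?_)
    · exact Finset.card_image_le
    · refine Finset.card_image_le.trans ?_
      rw [Finset.card_erase_of_mem (Finset.mem_image_of_mem Gm hg₀)]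
  have hJcard : J.card =
      Module.finrank ℝ (Submodule.span ℝ
        (Set.range (fun e : {x // x ∈ J} => rowVec Fm Gm e.val))) := by
    rw [finrank_span_eq_card hJ, Fintype.card_coe]
  have hle : Submodule.span ℝ (Set.range (fun e : {x // x ∈ J} => rowVec Fm Gm e.val)) ≤
      Submodule.span ℝ (U : Set ((Set E ⊕ Set E) → ℝ)) :=
    Submodule.span_le.2 (by rintro x ⟨e, rfl⟩; exact hrow e.val e.2)
  have hmono := Submodule.finrank_mono hle
  have hU' : Module.finrank ℝ (Submodule.span ℝ (U : Set ((Set E ⊕ Set E) → ℝ))) ≤ U.card := by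
    simpa [Set.finrank] using finrank_span_finset_le_card U
  have hpos : 1 ≤ (J.image Gm).card :=
    Finset.card_pos.2 ⟨G₀, Finset.mem_image_of_mem Gm hg₀⟩
  omega

lemma finrank_rows_eq_sSup (Fm Gm : E → Set E) :
    Module.finrank ℝ (Submodule.span ℝ (Set.range (rowVec Fm Gm))) =
      sSup {n | ∃ I : Finset E,
        (∀ J ⊆ I, J.Nonempty → J.card < (J.image Fm).card + (J.image Gm).card) ∧
        I.card = n} := by
  set S := {n | ∃ I : Finset E,
        (∀ J ⊆ I, J.Nonempty → J.card < (J.image Fm).card + (J.image Gm).card) ∧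
        I.card = n} with hS
  set D := Module.finrank ℝ (Submodule.span ℝ (Set.range (rowVec Fm Gm))) with hD
  have hub : ∀ n ∈ S, n ≤ D := by
    rintro n ⟨I, hcond, rfl⟩
    have hind := indep_of_cond Fm Gm I hcond
    have h1 : Fintype.card {x // x ∈ I} =
        Module.finrank ℝ (Submodule.span ℝ
          (Set.range (fun e : {x // x ∈ I} => rowVec Fm Gm e.val))) :=
      (finrank_span_eq_card hind).symm
    have h2 : Submodule.span ℝ (Set.range (fun e : {x // x ∈ I} => rowVec Fm Gm e.val)) ≤
        Submodule.span ℝ (Set.range (rowVec Fm Gm)) :=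
      Submodule.span_mono (by rintro x ⟨e, rfl⟩; exact ⟨e.val, rfl⟩)
    calc I.card = Fintype.card {x // x ∈ I} := (Fintype.card_coe I).symm
      _ ≤ D := h1.le.trans (Submodule.finrank_mono h2)
  have hmem : D ∈ S := by
    obtain ⟨b, hbsub, hbspan, hbindep⟩ := exists_linearIndependent ℝ (Set.range (rowVec Fm Gm))
    have hbfin : b.Finite := (Set.finite_range _).subset hbsub
    have := hbfin.fintype
    have hchoice : ∀ x ∈ hbfin.toFinset, ∃ e : E, rowVec Fm Gm e = x := by
      intro x hx
      exact hbsub (hbfin.mem_toFinset.1 hx)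
    set g : {x // x ∈ hbfin.toFinset} → E := fun x => (hchoice x.val x.2).choose with hg
    have hgrow : ∀ x, rowVec Fm Gm (g x) = x.val := fun x => (hchoice x.val x.2).choose_spec
    have hginj : Function.Injective g := by
      intro x y hxy
      apply Subtype.ext
      rw [← hgrow x, ← hgrow y, hxy]
    set I : Finset E := Finset.univ.image g with hI
    have hIcard : I.card = Fintype.card {x // x ∈ hbfin.toFinset} := by
      rw [hI, Finset.card_image_of_injective _ hginj, Finset.card_univ]
    have hmemrow : ∀ e ∈ I, rowVec Fm Gm e ∈ b := by
      intro e he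
      obtain ⟨x, _, rfl⟩ := Finset.mem_image.1 he
      rw [hgrow x]
      exact hbfin.mem_toFinset.1 x.2
    set h : {x // x ∈ I} → b := fun e => ⟨rowVec Fm Gm e.val, hmemrow e.val e.2⟩ with hh
    have hhinj : Function.Injective h := by
      intro e e' hee'
      have h1 : rowVec Fm Gm e.val = rowVec Fm Gm e'.val := by
        simpa [hh] using congrArg Subtype.val hee'
      obtain ⟨x, _, hx⟩ := Finset.mem_image.1 e.2
      obtain ⟨y, _, hy⟩ := Finset.mem_image.1 e'.2
      apply Subtype.ext
      rw [← hx, ← hy]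
      apply congrArg g
      apply Subtype.ext
      rw [← hgrow x, ← hgrow y, hx, hy]
      exact h1
    have hindI : LinearIndependent ℝ (fun e : {x // x ∈ I} => rowVec Fm Gm e.val) :=
      hbindep.comp h hhinj
    have hcond := cond_of_indep Fm Gm I hindI
    refine ⟨I, hcond, ?_⟩
    have hcardb : Module.finrank ℝ (Submodule.span ℝ b) = Fintype.card b := by
      have := finrank_span_eq_card hbindep
      rwa [Subtype.range_coe] at this
    rw [hIcard, hD, ← hbspan, hcardb]
    exact Fintype.card_congr (Equiv.subtypeEquivRight (by simp [hbfin.mem_toFinset])).symm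
  exact le_antisymm (le_csSup ⟨D, hub⟩ hmem) (csSup_le ⟨D, hmem⟩ hub)

lemma finrank_cols_eq_rows (Fm Gm : E → Set E) (𝓕 𝓖 : Finset (Set E))
    (hFm : ∀ e, Fm e ∈ 𝓕) (hGm : ∀ e, Gm e ∈ 𝓖) :
    Module.finrank ℝ (Submodule.span ℝ (incidenceCol Fm '' ↑𝓕 ∪ incidenceCol Gm '' ↑𝓖)) =
    Module.finrank ℝ (Submodule.span ℝ (Set.range (rowVec Fm Gm))) := by
  set A : Matrix E (Set E ⊕ Set E) ℝ := Matrix.of (rowVec Fm Gm) with hA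
  have hAT : ∀ j, A.transpose j = Sum.elim (incidenceCol Fm) (incidenceCol Gm) j := by
    intro j
    cases j with
    | inl F => rfl
    | inr G => rfl
  have hspan1 : Submodule.span ℝ (Set.range A.transpose) =
      Submodule.span ℝ (incidenceCol Fm '' ↑𝓕 ∪ incidenceCol Gm '' ↑𝓖) := by
    apply le_antisymm
    · rw [Submodule.span_le]
      rintro x ⟨j, rfl⟩
      rw [hAT]
      cases j with
      | inl F =>
        by_cases hF : F ∈ 𝓕
        · exact Submodule.subset_span (Or.inl ⟨F, hF, rfl⟩)
        · have : incidenceCol Fm F = 0 := by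
            funext e
            exact if_neg (fun h : Fm e = F => hF (h ▸ hFm e))
          simpa [this] using Submodule.zero_mem _
      | inr G =>
        by_cases hG : G ∈ 𝓖
        · exact Submodule.subset_span (Or.inr ⟨G, hG, rfl⟩)
        · have : incidenceCol Gm G = 0 := by
            funext e
            exact if_neg (fun h : Gm e = G => hG (h ▸ hGm e))
          simpa [this] using Submodule.zero_mem _
    · rw [Submodule.span_le]
      rintro x (⟨F, hF, rfl⟩ | ⟨G, hG, rfl⟩)
      · exact Submodule.subset_span ⟨Sum.inl F, hAT (Sum.inl F)⟩
      · exact Submodule.subset_span ⟨Sum.inr G, hAT (Sum.inr G)⟩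
  have hrank1 : A.rank = Module.finrank ℝ
      (Submodule.span ℝ (incidenceCol Fm '' ↑𝓕 ∪ incidenceCol Gm '' ↑𝓖)) := by
    rw [Matrix.rank, Matrix.range_mulVecLin, ← hspan1]
    rfl
  have hrank2 : A.transpose.rank = Module.finrank ℝ
      (Submodule.span ℝ (Set.range (rowVec Fm Gm))) := by
    rw [Matrix.rank, Matrix.range_mulVecLin]
    rfl
  rw [← hrank1, ← hrank2, Matrix.rank_transpose]

lemma zero_mem_bergmanCone (Fm : E → Set E) : (0 : E → ℝ) ∈ bergmanCone Fm :=
  fun _ _ => ⟨fun _ => le_rfl, fun _ => rfl⟩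

lemma span_bergmanCone_eq (Fm : E → Set E) (𝓕 : Finset (Set E)) (hFm : ∀ e, Fm e ∈ 𝓕) :
    Submodule.span ℝ (bergmanCone Fm) = Submodule.span ℝ (incidenceCol Fm '' ↑𝓕) := by
  apply le_antisymm
  · rw [Submodule.span_le]
    intro ω hω
    have hconst : ∀ e f : E, Fm e = Fm f → ω e = ω f := fun e f h => (hω e f).2 h
    set c : Set E → ℝ := fun F => if h : ∃ e, Fm e = F then ω h.choose else 0 with hc
    have hrepr : ω = ∑ F ∈ 𝓕, c F • incidenceCol Fm F := by
      funext e
      have : (∑ F ∈ 𝓕, c F • incidenceCol Fm F) e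
          = ∑ F ∈ 𝓕, (if Fm e = F then c F else 0) := by
        rw [Finset.sum_apply]
        apply Finset.sum_congr rfl
        intro F _
        by_cases h : Fm e = F <;> simp [incidenceCol, h]
      rw [this, Finset.sum_ite_eq 𝓕 (Fm e) c, if_pos (hFm e), hc]
      have hex : ∃ f, Fm f = Fm e := ⟨e, rfl⟩
      show ω e = if h : ∃ f, Fm f = Fm e then ω h.choose else 0
      rw [dif_pos hex]
      exact (hconst _ _ hex.choose_spec).symm
    rw [hrepr]
    exact Submodule.sum_mem _ (fun F hF => Submodule.smul_mem _ _
      (Submodule.subset_span ⟨F, hF, rfl⟩))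
  · rw [Submodule.span_le]
    rintro x ⟨F, _, rfl⟩
    have h1 : (fun e => if F ⊆ Fm e then (1:ℝ) else 0) ∈ bergmanCone Fm := by
      intro e f
      constructor
      · intro hef
        show (if F ⊆ Fm e then (1:ℝ) else 0) ≤ (if F ⊆ Fm f then (1:ℝ) else 0)
        by_cases h : F ⊆ Fm e
        · rw [if_pos h, if_pos (h.trans hef.subset)]
        · rw [if_neg h]
          by_cases h' : F ⊆ Fm f <;> simp [h']
      · intro hef
        show (if F ⊆ Fm e then (1:ℝ) else 0) = (if F ⊆ Fm f then (1:ℝ) else 0)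
        rw [hef]
    have h2 : (fun e => if F ⊂ Fm e then (1:ℝ) else 0) ∈ bergmanCone Fm := by
      intro e f
      constructor
      · intro hef
        show (if F ⊂ Fm e then (1:ℝ) else 0) ≤ (if F ⊂ Fm f then (1:ℝ) else 0)
        by_cases h : F ⊂ Fm e
        · rw [if_pos h, if_pos (h.trans hef)]
        · rw [if_neg h]
          by_cases h' : F ⊂ Fm f <;> simp [h']
      · intro hef
        show (if F ⊂ Fm e then (1:ℝ) else 0) = (if F ⊂ Fm f then (1:ℝ) else 0)
        rw [hef]
    have hdiff : incidenceCol Fm F =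
        (fun e => if F ⊆ Fm e then (1:ℝ) else 0) - (fun e => if F ⊂ Fm e then (1:ℝ) else 0) := by
      funext e
      simp only [incidenceCol, Pi.sub_apply]
      by_cases h : Fm e = F
      · subst h
        rw [if_pos rfl, if_pos (subset_refl _), if_neg (fun hh => hh.ne rfl)]
        norm_num
      · rw [if_neg h]
        by_cases h' : F ⊆ Fm e
        · rw [if_pos h', if_pos (ssubset_of_subset_of_ne h' (fun hh => h hh.symm))]
          norm_num
        · rw [if_neg h', if_neg (fun hh => h' hh.subset)]
          norm_num
    rw [hdiff]
    exact Submodule.sub_mem _ (Submodule.subset_span h1) (Submodule.subset_span h2)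

lemma span_minkowski (K₁ K₂ : Set (E → ℝ)) (h₁ : (0 : E → ℝ) ∈ K₁) (h₂ : (0 : E → ℝ) ∈ K₂) :
    Submodule.span ℝ (K₁ + K₂) = Submodule.span ℝ K₁ ⊔ Submodule.span ℝ K₂ := by
  apply le_antisymm
  · rw [Submodule.span_le]
    rintro x ⟨a, ha, b, hb, rfl⟩
    exact Submodule.add_mem _
      (Submodule.mem_sup_left (Submodule.subset_span ha))
      (Submodule.mem_sup_right (Submodule.subset_span hb))
  · apply sup_le <;> apply Submodule.span_mono
    · intro a ha; exact ⟨a, ha, 0, h₂, add_zero a⟩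
    · intro b hb; exact ⟨0, h₁, b, hb, zero_add b⟩

end Helpers

/-- the linear span of the Minkowski sum `K_𝓕 + K_𝓖` equals the column
span of the vertex–edge incidence matrix of the bipartite multigraph `H^E_{𝓕,𝓖}`;
in particular its dimension equals the rank of the graphic matroid of `H^E_{𝓕,𝓖}`
(the largest cardinality of a cycle-free edge subset). -/
theorem span_bergman_sum_eq_incidence_span {E : Type*} [Fintype E]
    (M N : Matroid E) (hME : M.E = Set.univ) (hNE : N.E = Set.univ)
    (𝓕 𝓖 : Finset (Set E))
    (h𝓕 : ∀ F ∈ 𝓕, M.IsFlat F ∧ F.Nonempty) (h𝓕chain : IsChain (· ⊆ ·) (↑𝓕 : Set (Set E)))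
    (h𝓖 : ∀ G ∈ 𝓖, N.IsFlat G ∧ G.Nonempty) (h𝓖chain : IsChain (· ⊆ ·) (↑𝓖 : Set (Set E)))
    (h𝓕top : Set.univ ∈ 𝓕) (h𝓖top : Set.univ ∈ 𝓖)
    (Fm Gm : E → Set E)
    (hFm : ∀ e : E, Fm e ∈ 𝓕 ∧ e ∈ Fm e ∧ ∀ F ∈ 𝓕, e ∈ F → Fm e ⊆ F)
    (hGm : ∀ e : E, Gm e ∈ 𝓖 ∧ e ∈ Gm e ∧ ∀ G ∈ 𝓖, e ∈ G → Gm e ⊆ G) :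
    Submodule.span ℝ (bergmanCone Fm + bergmanCone Gm) =
      Submodule.span ℝ (incidenceCol Fm '' ↑𝓕 ∪ incidenceCol Gm '' ↑𝓖) ∧
    Module.finrank ℝ (Submodule.span ℝ (bergmanCone Fm + bergmanCone Gm)) =
      sSup {n | ∃ I : Finset E,
        (∀ J ⊆ I, J.Nonempty → J.card < (J.image Fm).card + (J.image Gm).card) ∧
        I.card = n} := by
  have hFm1 : ∀ e, Fm e ∈ 𝓕 := fun e => (hFm e).1
  have hGm1 : ∀ e, Gm e ∈ 𝓖 := fun e => (hGm e).1
  have hspan : Submodule.span ℝ (bergmanCone Fm + bergmanCone Gm) =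
      Submodule.span ℝ (incidenceCol Fm '' ↑𝓕 ∪ incidenceCol Gm '' ↑𝓖) := by
    rw [span_minkowski _ _ (zero_mem_bergmanCone Fm) (zero_mem_bergmanCone Gm),
      span_bergmanCone_eq Fm 𝓕 hFm1, span_bergmanCone_eq Gm 𝓖 hGm1,
      Submodule.span_union]
  refine ⟨hspan, ?_⟩
  rw [hspan, finrank_cols_eq_rows Fm Gm 𝓕 𝓖 hFm1 hGm1, finrank_rows_eq_sSup Fm Gm]
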